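/- For p ≥ 2 and 0 < ε < 1, the Schatten p-norm satisfies the smoothness property with parameters (ε, ε^{p/2}/(p/2)): for all real matrices A, Y, C with m columns such that A is the vertical concatenation of some matrix X and Y, if (1 − ε^{p/2}/(p/2))·‖A‖_{S_p} ≤ ‖Y‖_{S_p}, then (1 − ε)·‖[A; C]‖_{S_p} ≤ ‖[Y; C]‖_{S_p}, where [M; C] denotes vertical concatenation. -/

import Mathlib

open Matrix

/-- The Schatten `p`-norm of a real matrix `M` with `m` columns:
`(∑ i, σᵢ(M) ^ p) ^ (1/p)`, where the singular values `σᵢ(M)` are the square roots of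
the eigenvalues of `MᴴM` (over `ℝ`, `Mᴴ = Mᵀ`). -/
noncomputable def schattenNorm {N : Type*} [Fintype N] {m : ℕ} (p : ℝ)
    (M : Matrix N (Fin m) ℝ) : ℝ :=
  (∑ i, Real.sqrt ((Matrix.isHermitian_conjTranspose_mul_self M).eigenvalues i) ^ p) ^ (1 / p)

open Real MeasureTheory Set
open scoped RealInnerProductSpace

variable {m : ℕ}

theorem inner_dot (x y : EuclideanSpace ℝ (Fin m)) : ⟪x, y⟫ = ∑ i, x i * y i := by
  simp [PiLp.inner_apply, mul_comm]

theorem inner_mulVec_expand (S : Matrix (Fin m) (Fin m) ℝ) (hS : S.IsHermitian)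
    (x y : EuclideanSpace ℝ (Fin m)) :
    ⟪x, (WithLp.toLp 2 (S *ᵥ y) : EuclideanSpace ℝ (Fin m))⟫ =
      ∑ i, hS.eigenvalues i * ⟪hS.eigenvectorBasis i, x⟫ * ⟪hS.eigenvectorBasis i, y⟫ := by
  set b := hS.eigenvectorBasis with hb
  have hy : y = ∑ i, ⟪b i, y⟫ • b i := by
    conv_lhs => rw [← b.sum_repr y]
    exact Finset.sum_congr rfl fun i _ => by rw [b.repr_apply_apply]
  conv_lhs => rw [hy]
  have hmv : (WithLp.toLp 2 (S *ᵥ (∑ i, ⟪b i, y⟫ • b i : EuclideanSpace ℝ (Fin m))) : EuclideanSpace ℝ (Fin m)) =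
      ∑ i, (⟪b i, y⟫ * hS.eigenvalues i) • (b i : EuclideanSpace ℝ (Fin m)) := by
    ext k
    simp only [WithLp.ofLp_sum, WithLp.ofLp_smul, Matrix.mulVec_sum, Matrix.mulVec_smul,
      hS.mulVec_eigenvectorBasis, Finset.sum_apply, Pi.smul_apply, smul_eq_mul, WithLp.ofLp_toLp]
    refine Finset.sum_congr rfl fun i _ => ?_
    rw [show S *ᵥ (b i).ofLp = hS.eigenvalues i • (b i).ofLp from hS.mulVec_eigenvectorBasis i,
      Pi.smul_apply, smul_eq_mul]
    ring
  rw [hmv]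
  rw [inner_sum]
  refine Finset.sum_congr rfl fun i _ => ?_
  rw [real_inner_smul_right, real_inner_comm x (b i)]
  ring

theorem qf_expand (S : Matrix (Fin m) (Fin m) ℝ) (hS : S.IsHermitian) (x : EuclideanSpace ℝ (Fin m)) :
    ⟪x, (WithLp.toLp 2 (S *ᵥ x) : EuclideanSpace ℝ (Fin m))⟫ = ∑ i, hS.eigenvalues i * ⟪hS.eigenvectorBasis i, x⟫^2 := by
  rw [inner_mulVec_expand S hS x x]
  exact Finset.sum_congr rfl fun i _ => by ring

theorem psd_qf_nonneg {S : Matrix (Fin m) (Fin m) ℝ} (hS : S.PosSemidef) (x : EuclideanSpace ℝ (Fin m)) :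
    0 ≤ ⟪x, (WithLp.toLp 2 (S *ᵥ x) : EuclideanSpace ℝ (Fin m))⟫ := by
  have := hS.dotProduct_mulVec_nonneg x
  simpa [PiLp.inner_apply, dotProduct, mul_comm] using this

theorem parseval_onb (b : OrthonormalBasis (Fin m) ℝ (EuclideanSpace ℝ (Fin m)))
    (x : EuclideanSpace ℝ (Fin m)) : ∑ i, ⟪b i, x⟫^2 = ⟪x, x⟫ := by
  have := b.sum_inner_mul_inner x x
  rw [← this]
  exact Finset.sum_congr rfl fun i _ => by rw [real_inner_comm x (b i)]; ring

theorem onb_self_inner (b : OrthonormalBasis (Fin m) ℝ (EuclideanSpace ℝ (Fin m))) (j : Fin m) :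
    ⟪b j, b j⟫ = 1 := by
  rw [real_inner_self_eq_norm_sq, b.orthonormal.1 j]; norm_num


noncomputable def krn (r : ℝ) (u : ℝ) : ℝ := u ^ (r - 1) / (1 + u)

theorem krn_nonneg {r : ℝ} {u : ℝ} (hu : 0 < u) : 0 ≤ krn r u := by
  unfold krn; positivity

theorem krn_integrableOn {r : ℝ} (hr0 : 0 < r) (hr1 : r < 1) :
    IntegrableOn (krn r) (Ioi (0:ℝ)) := by
  have hmeas : ∀ s : Set ℝ, s ⊆ Ioi (0:ℝ) → MeasurableSet s → AEStronglyMeasurable (krn r) (volume.restrict s) := by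
    intro s hs hms
    have hcont : ContinuousOn (krn r) (Ioi (0:ℝ)) := by
      apply ContinuousOn.div
      · exact fun x hx => (Real.continuousAt_rpow_const x _ (Or.inl (ne_of_gt hx))).continuousWithinAt
      · fun_prop
      · intro x hx; simp only [Ioi, mem_setOf_eq] at hx; positivity
    exact ((hcont.mono hs).aestronglyMeasurable hms)
  rw [← Ioc_union_Ioi_eq_Ioi (zero_le_one (α := ℝ))]
  apply IntegrableOn.union
  · have hint : IntegrableOn (fun u : ℝ => u ^ (r - 1)) (Ioc (0:ℝ) 1) := by
      have := intervalIntegral.intervalIntegrable_rpow' (a := 0) (b := 1) (r := r - 1) (by linarith)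
      rwa [intervalIntegrable_iff_integrableOn_Ioc_of_le zero_le_one] at this
    apply hint.mono' (hmeas _ (fun x hx => hx.1) measurableSet_Ioc)
    filter_upwards [ae_restrict_mem measurableSet_Ioc] with u hu
    have hu0 : 0 < u := hu.1
    have hk : 0 ≤ krn r u := krn_nonneg hu0
    rw [Real.norm_eq_abs, abs_of_nonneg hk]
    unfold krn
    rw [div_le_iff₀ (by positivity)]
    nlinarith [rpow_nonneg hu0.le (r - 1)]
  · have hint : IntegrableOn (fun u : ℝ => u ^ (r - 2)) (Ioi (1:ℝ)) :=
      integrableOn_Ioi_rpow_of_lt (by linarith) one_pos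
    apply hint.mono' (hmeas _ (fun x hx => mem_Ioi.2 (lt_trans one_pos (mem_Ioi.1 hx))) measurableSet_Ioi)
    filter_upwards [ae_restrict_mem measurableSet_Ioi] with u hu
    have hu0 : (0:ℝ) < u := lt_trans one_pos hu
    rw [Real.norm_eq_abs, abs_of_nonneg (krn_nonneg hu0)]
    unfold krn
    have h1 : u ^ (r - 2) = u ^ (r - 1) / u := by
      rw [show r - 2 = r - 1 - 1 by ring, Real.rpow_sub_one (ne_of_gt hu0)]
    rw [h1, div_le_div_iff₀ (by positivity) hu0]
    have : (0:ℝ) ≤ u ^ (r-1) := rpow_nonneg hu0.le _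
    nlinarith

noncomputable def crC (r : ℝ) : ℝ := ∫ u in Ioi (0:ℝ), krn r u

theorem crC_pos {r : ℝ} (hr0 : 0 < r) (hr1 : r < 1) : 0 < crC r := by
  have hki := krn_integrableOn hr0 hr1
  have h1 : (1:ℝ)/2 ≤ ∫ u in Ioc (0:ℝ) 1, krn r u := by
    have hIoc : IntegrableOn (krn r) (Ioc (0:ℝ) 1) :=
      hki.mono_set (fun x hx => hx.1)
    have h3 : ∫ u in Ioc (0:ℝ) 1, (1:ℝ)/2 ≤ ∫ u in Ioc (0:ℝ) 1, krn r u := by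
      apply setIntegral_mono_on (integrableOn_const (hs := by simp)) hIoc measurableSet_Ioc
      intro u hu
      unfold krn
      have h2 : (1:ℝ) ≤ u ^ (r - 1) := by
        calc (1:ℝ) = u ^ (0:ℝ) := by rw [rpow_zero]
        _ ≤ u ^ (r-1) := rpow_le_rpow_of_exponent_ge hu.1 hu.2 (by linarith)
      rw [le_div_iff₀ (by nlinarith [hu.1])]
      nlinarith [hu.1, hu.2]
    calc (1:ℝ)/2 = ∫ u in Ioc (0:ℝ) 1, (1:ℝ)/2 := by simp
    _ ≤ _ := h3
  have h2 : ∫ u in Ioc (0:ℝ) 1, krn r u ≤ crC r := by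
    unfold crC
    apply setIntegral_mono_set hki
    · filter_upwards [ae_restrict_mem measurableSet_Ioi] with u hu using krn_nonneg hu
    · exact HasSubset.Subset.eventuallyLE (fun x hx => hx.1)
  linarith

theorem krn_scaled_eq {r x : ℝ} (hx : 0 < x) {lam : ℝ} (hlam : 0 < lam) :
    lam ^ (r-1) * (x / (lam + x)) = x ^ (r-1) * krn r (x⁻¹ * lam) := by
  unfold krn
  have hxr : x ^ (r-1) * x⁻¹ ^ (r-1) = 1 := by
    rw [← Real.mul_rpow hx.le (inv_pos.2 hx).le, mul_inv_cancel₀ (ne_of_gt hx), Real.one_rpow]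
  have h1 : (1 + x⁻¹ * lam) = (x + lam)/x := by field_simp
  rw [Real.mul_rpow (inv_pos.2 hx).le hlam.le, h1,
    show x ^ (r-1) * (x⁻¹ ^ (r-1) * lam ^ (r-1) / ((x + lam)/x)) =
      (x ^ (r-1) * x⁻¹ ^ (r-1)) * (lam ^ (r-1) / ((x + lam)/x)) from by ring,
    hxr, one_mul, div_div_eq_mul_div, add_comm x lam]
  ring

theorem krn_scaled_integrable {r : ℝ} (hr0 : 0 < r) (hr1 : r < 1) {x : ℝ} (hx : 0 < x) :
    IntegrableOn (fun lam : ℝ => lam ^ (r-1) * (x / (lam + x))) (Ioi (0:ℝ)) := by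
  have heq : ∀ lam ∈ Ioi (0:ℝ), lam ^ (r-1) * (x / (lam + x)) = x ^ (r-1) * krn r (x⁻¹ * lam) :=
    fun lam hlam => krn_scaled_eq hx hlam
  rw [integrableOn_congr_fun heq measurableSet_Ioi]
  apply Integrable.const_mul
  have := (integrableOn_Ioi_comp_mul_left_iff (krn r) 0 (inv_pos.2 hx)).2
  simpa [IntegrableOn] using this (by simpa using krn_integrableOn hr0 hr1)

theorem krn_scaled_integral {r : ℝ} (hr0 : 0 < r) (hr1 : r < 1) {x : ℝ} (hx : 0 ≤ x) :
    ∫ lam in Ioi (0:ℝ), lam ^ (r-1) * (x / (lam + x)) = crC r * x ^ r := by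
  rcases eq_or_lt_of_le hx with h | h
  · simp [← h, Real.zero_rpow (ne_of_gt hr0)]
  · have heq : ∀ lam ∈ Ioi (0:ℝ), lam ^ (r-1) * (x / (lam + x)) = x ^ (r-1) * krn r (x⁻¹ * lam) :=
      fun lam hlam => krn_scaled_eq h hlam
    rw [setIntegral_congr_fun measurableSet_Ioi heq, integral_const_mul]
    rw [integral_comp_mul_left_Ioi (krn r) 0 (inv_pos.2 h)]
    simp only [mul_zero, inv_inv, smul_eq_mul]
    rw [show (∫ (u : ℝ) in Ioi 0, krn r u) = crC r from rfl]
    rw [show x ^ (r-1) * (x * crC r) = (x ^ (r-1) * x) * crC r from by ring]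
    rw [← Real.rpow_add_one (ne_of_gt h)]
    ring_nf

section KL
variable {P T : Matrix (Fin m) (Fin m) ℝ} (hP : P.PosSemidef) (hT : T.PosSemidef)
  (hPT : (T - P).PosSemidef)

include hPT in
theorem key_variational (j : Fin m) {lam : ℝ} (hlam : 0 < lam) :
    ∑ i, ⟪hT.1.eigenvectorBasis i, hP.1.eigenvectorBasis j⟫^2 / (lam + hT.1.eigenvalues i) ≤
      1 / (lam + hP.1.eigenvalues j) := by
  set v := hT.1.eigenvectorBasis with hv
  set u := hP.1.eigenvectorBasis with hu
  set μ := hT.1.eigenvalues with hμ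
  set a := hP.1.eigenvalues with ha
  have hμ0 : ∀ i, 0 ≤ μ i := hT.eigenvalues_nonneg
  have ha0 : ∀ i, 0 ≤ a i := hP.eigenvalues_nonneg
  have hlamμ : ∀ i, 0 < lam + μ i := fun i => by have := hμ0 i; linarith
  have hlama : ∀ i, 0 < lam + a i := fun i => by have := ha0 i; linarith
  set z : EuclideanSpace ℝ (Fin m) := ∑ i, (⟪v i, u j⟫ / (lam + μ i)) • v i with hz
  set S : ℝ := ∑ i, ⟪v i, u j⟫^2 / (lam + μ i) with hS
  have hvz : ∀ i, ⟪v i, z⟫ = ⟪v i, u j⟫ / (lam + μ i) := by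
    intro i
    rw [hz, inner_sum]
    rw [Finset.sum_eq_single i]
    · rw [real_inner_smul_right, onb_self_inner v i, mul_one]
    · intro k _ hk
      rw [real_inner_smul_right, orthonormal_iff_ite.1 v.orthonormal i k, if_neg (Ne.symm hk), mul_zero]
    · intro h; exact absurd (Finset.mem_univ i) h
  have h_uz : ⟪u j, z⟫ = S := by
    rw [hz, inner_sum, hS]
    refine Finset.sum_congr rfl fun i _ => ?_
    rw [real_inner_smul_right, real_inner_comm (u j) (v i)]
    ring
  have h_zz : ⟪z, z⟫ = ∑ i, (⟪v i, u j⟫ / (lam + μ i))^2 := by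
    rw [← parseval_onb v z]
    exact Finset.sum_congr rfl fun i _ => by rw [hvz i]
  have h_Tz : ⟪z, (WithLp.toLp 2 (T *ᵥ z) : EuclideanSpace ℝ (Fin m))⟫ = ∑ i, μ i * (⟪v i, u j⟫ / (lam + μ i))^2 := by
    rw [qf_expand T hT.1 z]
    exact Finset.sum_congr rfl fun i _ => by rw [← hv, hvz i, ← hμ]
  have hid : lam * ⟪z, z⟫ + ⟪z, (WithLp.toLp 2 (T *ᵥ z) : EuclideanSpace ℝ (Fin m))⟫ = S := by
    rw [h_zz, h_Tz, hS, Finset.mul_sum, ← Finset.sum_add_distrib]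
    refine Finset.sum_congr rfl fun i _ => ?_
    have h := hlamμ i
    field_simp
  have h_P_le : ⟪z, (WithLp.toLp 2 (P *ᵥ z) : EuclideanSpace ℝ (Fin m))⟫ ≤ ⟪z, (WithLp.toLp 2 (T *ᵥ z) : EuclideanSpace ℝ (Fin m))⟫ := by
    have h0 := psd_qf_nonneg hPT z
    have hsub : ((T - P) *ᵥ (z : EuclideanSpace ℝ (Fin m))) = (T *ᵥ z) - (P *ᵥ z) := by
      rw [Matrix.sub_mulVec]
    rw [show (WithLp.toLp 2 ((T - P) *ᵥ (z : EuclideanSpace ℝ (Fin m))) : EuclideanSpace ℝ (Fin m)) =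
        ((WithLp.toLp 2 (T *ᵥ z) : EuclideanSpace ℝ (Fin m)) - (WithLp.toLp 2 (P *ᵥ z) : EuclideanSpace ℝ (Fin m))) from by rw [hsub, WithLp.toLp_sub],
      inner_sub_right] at h0
    linarith
  have h_zz_u : ⟪z, z⟫ = ∑ k, ⟪u k, z⟫^2 := (parseval_onb u z).symm
  have h_Pz_u : ⟪z, (WithLp.toLp 2 (P *ᵥ z) : EuclideanSpace ℝ (Fin m))⟫ = ∑ k, a k * ⟪u k, z⟫^2 :=
    qf_expand P hP.1 z
  have step1 : S ≤ 2 * ⟪u j, z⟫ - lam * ⟪z, z⟫ - ⟪z, (WithLp.toLp 2 (P *ᵥ z) : EuclideanSpace ℝ (Fin m))⟫ := by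
    rw [h_uz]; linarith
  have step2 : 2 * ⟪u j, z⟫ - lam * ⟪z, z⟫ - ⟪z, (WithLp.toLp 2 (P *ᵥ z) : EuclideanSpace ℝ (Fin m))⟫ ≤
      2 * ⟪u j, z⟫ - (lam + a j) * ⟪u j, z⟫^2 := by
    rw [h_zz_u, h_Pz_u, Finset.mul_sum]
    have hsplit : ∑ k, (lam * ⟪u k, z⟫^2 + a k * ⟪u k, z⟫^2) =
        (∑ k, lam * ⟪u k, z⟫^2) + ∑ k, a k * ⟪u k, z⟫^2 := Finset.sum_add_distrib
    have : (lam + a j) * ⟪u j, z⟫^2 ≤ ∑ k, (lam * ⟪u k, z⟫^2 + a k * ⟪u k, z⟫^2) := by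
      rw [show (lam + a j) * ⟪u j, z⟫^2 = lam * ⟪u j, z⟫^2 + a j * ⟪u j, z⟫^2 from by ring]
      apply Finset.single_le_sum (f := fun k => lam * ⟪u k, z⟫^2 + a k * ⟪u k, z⟫^2)
      · intro k _
        have h1 := sq_nonneg (⟪u k, z⟫)
        have h2 := ha0 k
        nlinarith
      · exact Finset.mem_univ j
    linarith [this, hsplit]
  have step3 : 2 * ⟪u j, z⟫ - (lam + a j) * ⟪u j, z⟫^2 ≤ 1 / (lam + a j) := by
    have h := hlama j
    set c : ℝ := 1 / (lam + a j) with hc0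
    have hc : (lam + a j) * c = 1 := by rw [hc0]; field_simp
    have hexp : (lam + a j) * (⟪u j, z⟫ - c)^2 =
        (lam + a j) * ⟪u j, z⟫^2 - 2 * ((lam + a j) * c) * ⟪u j, z⟫ + ((lam + a j) * c) * c := by
      ring
    rw [hc] at hexp
    nlinarith [mul_nonneg h.le (sq_nonneg (⟪u j, z⟫ - c)), hexp]
  linarith

end KL

theorem krn_scaled_integrable' {r : ℝ} (hr0 : 0 < r) (hr1 : r < 1) {x : ℝ} (hx : 0 ≤ x) :
    IntegrableOn (fun lam : ℝ => lam ^ (r-1) * (x / (lam + x))) (Ioi (0:ℝ)) := by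
  rcases eq_or_lt_of_le hx with h | h
  · have : (fun lam : ℝ => lam ^ (r-1) * (x / (lam + x))) = fun _ => (0:ℝ) := by
      funext lam; rw [← h]; simp
    rw [this]
    exact integrableOn_zero
  · exact krn_scaled_integrable hr0 hr1 h

section perj
variable {P T : Matrix (Fin m) (Fin m) ℝ} (hP : P.PosSemidef) (hT : T.PosSemidef)
  (hPT : (T - P).PosSemidef)

theorem qf_onbasis (S : Matrix (Fin m) (Fin m) ℝ) (hS : S.IsHermitian) (j : Fin m) :
    ⟪hS.eigenvectorBasis j, (WithLp.toLp 2 (S *ᵥ hS.eigenvectorBasis j) : EuclideanSpace ℝ (Fin m))⟫ =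
      hS.eigenvalues j := by
  rw [qf_expand S hS, Finset.sum_eq_single j]
  · rw [onb_self_inner hS.eigenvectorBasis j]; ring
  · intro k _ hk
    rw [orthonormal_iff_ite.1 hS.eigenvectorBasis.orthonormal k j, if_neg hk]; ring
  · intro h; exact absurd (Finset.mem_univ j) h

include hPT in
theorem perj_key {r : ℝ} (hr : 0 ≤ r) (j : Fin m) :
    (hP.1.eigenvalues j) ^ r ≤
      ∑ i, ⟪hT.1.eigenvectorBasis i, hP.1.eigenvectorBasis j⟫^2 * (hT.1.eigenvalues i) ^ r := by
  set v := hT.1.eigenvectorBasis with hv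
  set u := hP.1.eigenvectorBasis with hu
  set μ := hT.1.eigenvalues with hμ
  set a := hP.1.eigenvalues with ha
  set c : Fin m → ℝ := fun i => ⟪v i, u j⟫^2 with hc
  have hμ0 : ∀ i, 0 ≤ μ i := hT.eigenvalues_nonneg
  have ha0 : ∀ i, 0 ≤ a i := hP.eigenvalues_nonneg
  have hc0 : ∀ i, 0 ≤ c i := fun i => sq_nonneg _
  have hc1 : ∑ i, c i = 1 := by
    rw [hc]
    have := parseval_onb v (u j)
    rw [this, onb_self_inner u j]
  have haT : a j ≤ ∑ i, c i * μ i := by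
    have h1 : ⟪u j, (WithLp.toLp 2 (P *ᵥ u j) : EuclideanSpace ℝ (Fin m))⟫ = a j := qf_onbasis P hP.1 j
    have h2 : ⟪u j, (WithLp.toLp 2 (T *ᵥ u j) : EuclideanSpace ℝ (Fin m))⟫ = ∑ i, c i * μ i := by
      rw [qf_expand T hT.1]
      exact Finset.sum_congr rfl fun i _ => by rw [hc]; ring
    have h0 := psd_qf_nonneg hPT (u j)
    have hsub : ((T - P) *ᵥ (u j : EuclideanSpace ℝ (Fin m))) = (T *ᵥ u j) - (P *ᵥ u j) :=
      Matrix.sub_mulVec T P (u j)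
    rw [show (WithLp.toLp 2 ((T - P) *ᵥ (u j : EuclideanSpace ℝ (Fin m))) : EuclideanSpace ℝ (Fin m)) =
        ((WithLp.toLp 2 (T *ᵥ u j) : EuclideanSpace ℝ (Fin m)) - (WithLp.toLp 2 (P *ᵥ u j) : EuclideanSpace ℝ (Fin m))) from by rw [hsub, WithLp.toLp_sub],
      inner_sub_right, h1, h2] at h0
    linarith
  rcases eq_or_lt_of_le hr with hr0 | hr0
  · -- r = 0
    rw [← hr0]
    simp only [Real.rpow_zero, mul_one]
    rw [hc1]
  rcases le_or_gt 1 r with hr1 | hr1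
  · -- r ≥ 1 : Jensen
    calc (a j) ^ r ≤ (∑ i, c i * μ i) ^ r :=
          Real.rpow_le_rpow (ha0 j) haT hr
    _ ≤ ∑ i, c i * μ i ^ r :=
          Real.rpow_arith_mean_le_arith_mean_rpow Finset.univ c μ
            (fun i _ => hc0 i) hc1 (fun i _ => hμ0 i) hr1
    _ = ∑ i, c i * μ i ^ r := rfl
  · -- 0 < r < 1 : integral representation
    have hKL : ∀ lam : ℝ, 0 < lam →
        ∑ i, c i / (lam + μ i) ≤ 1 / (lam + a j) := fun lam hlam =>
      key_variational hP hT hPT j hlam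
    have key : ∀ lam ∈ Ioi (0:ℝ),
        lam ^ (r-1) * (a j / (lam + a j)) ≤ ∑ i, c i * (lam ^ (r-1) * (μ i / (lam + μ i))) := by
      intro lam hlam
      simp only [mem_Ioi] at hlam
      have hlr : (0:ℝ) ≤ lam ^ (r-1) := Real.rpow_nonneg hlam.le _
      have e1 : ∀ i, c i * (μ i / (lam + μ i)) = c i - lam * (c i / (lam + μ i)) := by
        intro i
        have h := hμ0 i
        have hne : lam + μ i ≠ 0 := by positivity
        field_simp
        ring
      have e2 : ∑ i, c i * (μ i / (lam + μ i)) = 1 - lam * ∑ i, c i / (lam + μ i) := by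
        rw [Finset.sum_congr rfl (fun i _ => e1 i), Finset.sum_sub_distrib, hc1, ← Finset.mul_sum]
      have e3 : a j / (lam + a j) = 1 - lam * (1 / (lam + a j)) := by
        have h := ha0 j
        have hne : lam + a j ≠ 0 := by positivity
        field_simp
        ring
      have h4 : a j / (lam + a j) ≤ ∑ i, c i * (μ i / (lam + μ i)) := by
        rw [e2, e3]
        have := hKL lam hlam
        nlinarith
      calc lam ^ (r-1) * (a j / (lam + a j)) ≤ lam ^ (r-1) * ∑ i, c i * (μ i / (lam + μ i)) :=
            mul_le_mul_of_nonneg_left h4 hlr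
      _ = ∑ i, c i * (lam ^ (r-1) * (μ i / (lam + μ i))) := by
            rw [Finset.mul_sum]; exact Finset.sum_congr rfl fun i _ => by ring
    have hint_a : IntegrableOn (fun lam : ℝ => lam ^ (r-1) * (a j / (lam + a j))) (Ioi (0:ℝ)) :=
      krn_scaled_integrable' hr0 hr1 (ha0 j)
    have hint_i : ∀ i, IntegrableOn
        (fun lam : ℝ => c i * (lam ^ (r-1) * (μ i / (lam + μ i)))) (Ioi (0:ℝ)) :=
      fun i => ((krn_scaled_integrable' hr0 hr1 (hμ0 i)).const_mul (c i) : _)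
    have hint_sum : IntegrableOn
        (fun lam : ℝ => ∑ i, c i * (lam ^ (r-1) * (μ i / (lam + μ i)))) (Ioi (0:ℝ)) := by
      apply MeasureTheory.integrable_finset_sum
      intro i _
      exact hint_i i
    have hle : ∫ lam in Ioi (0:ℝ), lam ^ (r-1) * (a j / (lam + a j)) ≤
        ∫ lam in Ioi (0:ℝ), ∑ i, c i * (lam ^ (r-1) * (μ i / (lam + μ i))) :=
      setIntegral_mono_on hint_a hint_sum measurableSet_Ioi key
    rw [krn_scaled_integral hr0 hr1 (ha0 j)] at hle
    have hsum_eq : ∫ lam in Ioi (0:ℝ), ∑ i, c i * (lam ^ (r-1) * (μ i / (lam + μ i))) =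
        ∑ i, c i * (crC r * μ i ^ r) := by
      rw [MeasureTheory.integral_finset_sum _ (fun i _ => hint_i i)]
      refine Finset.sum_congr rfl fun i _ => ?_
      rw [MeasureTheory.integral_const_mul, krn_scaled_integral hr0 hr1 (hμ0 i)]
    rw [hsum_eq] at hle
    have hcr := crC_pos hr0 hr1
    have : crC r * a j ^ r ≤ crC r * ∑ i, c i * μ i ^ r := by
      calc crC r * a j ^ r ≤ ∑ i, c i * (crC r * μ i ^ r) := hle
      _ = crC r * ∑ i, c i * μ i ^ r := by rw [Finset.mul_sum]; exact Finset.sum_congr rfl fun i _ => by ring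
    exact le_of_mul_le_mul_left this hcr

end perj

noncomputable def eigSum (q : ℝ) {m : ℕ} (S : Matrix (Fin m) (Fin m) ℝ) : ℝ :=
  if h : S.IsHermitian then ∑ i, (h.eigenvalues i) ^ q else 0

theorem eigSum_herm {q : ℝ} {S : Matrix (Fin m) (Fin m) ℝ} (h : S.IsHermitian) :
    eigSum q S = ∑ i, (h.eigenvalues i) ^ q := dif_pos h

theorem eigSum_nonneg {q : ℝ} {S : Matrix (Fin m) (Fin m) ℝ} (hS : S.PosSemidef) :
    0 ≤ eigSum q S := by
  rw [eigSum_herm hS.1]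
  exact Finset.sum_nonneg fun i _ => Real.rpow_nonneg (hS.eigenvalues_nonneg i) q

theorem rpow_split {x q : ℝ} (hx : 0 ≤ x) (hq : 1 ≤ q) : x ^ q = x ^ (q-1) * x := by
  rcases eq_or_lt_of_le hx with h | h
  · rw [← h, Real.zero_rpow (by linarith), mul_zero]
  · calc x ^ q = x ^ (q - 1 + 1) := by congr 1; ring
    _ = x ^ (q-1) * x := Real.rpow_add_one (ne_of_gt h) _

section eigSumFacts
variable {P D : Matrix (Fin m) (Fin m) ℝ} (hP : P.PosSemidef) (hD : D.PosSemidef) {q : ℝ}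

include hP in
theorem peierls (b : OrthonormalBasis (Fin m) ℝ (EuclideanSpace ℝ (Fin m))) (hq : 1 ≤ q) :
    ∑ i, ⟪b i, (WithLp.toLp 2 (P *ᵥ b i) : EuclideanSpace ℝ (Fin m))⟫ ^ q ≤ eigSum q P := by
  set u := hP.1.eigenvectorBasis with hu
  set a := hP.1.eigenvalues with ha
  have ha0 : ∀ j, 0 ≤ a j := hP.eigenvalues_nonneg
  rw [eigSum_herm hP.1]
  have hexp : ∀ i, ⟪b i, (WithLp.toLp 2 (P *ᵥ b i) : EuclideanSpace ℝ (Fin m))⟫ = ∑ j, ⟪u j, b i⟫^2 * a j := by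
    intro i
    rw [qf_expand P hP.1]
    exact Finset.sum_congr rfl fun j _ => by ring
  have hrow : ∀ i, ∑ j, ⟪u j, b i⟫^2 = 1 := by
    intro i
    have h1 := parseval_onb u (b i)
    rw [h1, onb_self_inner b i]
  have hcol : ∀ j, ∑ i, ⟪u j, b i⟫^2 = 1 := by
    intro j
    have h1 := parseval_onb b (u j)
    rw [← onb_self_inner u j, ← h1]
    exact Finset.sum_congr rfl fun i _ => by rw [real_inner_comm]
  calc ∑ i, ⟪b i, (WithLp.toLp 2 (P *ᵥ b i) : EuclideanSpace ℝ (Fin m))⟫ ^ q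
      = ∑ i, (∑ j, ⟪u j, b i⟫^2 * a j) ^ q := by
        exact Finset.sum_congr rfl fun i _ => by rw [hexp i]
    _ ≤ ∑ i, ∑ j, ⟪u j, b i⟫^2 * a j ^ q := by
        apply Finset.sum_le_sum
        intro i _
        exact Real.rpow_arith_mean_le_arith_mean_rpow Finset.univ _ a
          (fun j _ => sq_nonneg _) (hrow i) (fun j _ => ha0 j) hq
    _ = ∑ j, (∑ i, ⟪u j, b i⟫^2) * a j ^ q := by
        rw [Finset.sum_comm]
        exact Finset.sum_congr rfl fun j _ => by rw [Finset.sum_mul]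
    _ = ∑ j, a j ^ q := by
        exact Finset.sum_congr rfl fun j _ => by rw [hcol j, one_mul]

include hP hD in
theorem eigSum_superadd (hq : 1 ≤ q) :
    eigSum q P + eigSum q D ≤ eigSum q (P + D) := by
  have hT : (P + D).PosSemidef := hP.add hD
  have hTP : (P + D - P).PosSemidef := by rwa [add_sub_cancel_left]
  have hTD : (P + D - D).PosSemidef := by rwa [add_sub_cancel_right]
  set v := hT.1.eigenvectorBasis with hv
  set μ := hT.1.eigenvalues with hμ
  have hμ0 : ∀ i, 0 ≤ μ i := hT.eigenvalues_nonneg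
  -- μ i = p i + d i
  have hsplit : ∀ i, μ i = ⟪v i, (WithLp.toLp 2 (P *ᵥ v i) : EuclideanSpace ℝ (Fin m))⟫ +
      ⟪v i, (WithLp.toLp 2 (D *ᵥ v i) : EuclideanSpace ℝ (Fin m))⟫ := by
    intro i
    have hq1 := qf_onbasis (P + D) hT.1 i
    have hadd : ((P + D) *ᵥ (v i : EuclideanSpace ℝ (Fin m))) = (P *ᵥ v i) + (D *ᵥ v i) :=
      Matrix.add_mulVec P D (v i)
    rw [show (WithLp.toLp 2 ((P + D) *ᵥ (v i : EuclideanSpace ℝ (Fin m))) : EuclideanSpace ℝ (Fin m)) =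
        ((WithLp.toLp 2 (P *ᵥ v i) : EuclideanSpace ℝ (Fin m)) + (WithLp.toLp 2 (D *ᵥ v i) : EuclideanSpace ℝ (Fin m))) from by rw [hadd, WithLp.toLp_add],
      inner_add_right] at hq1
    rw [hμ]
    exact hq1.symm
  -- half bound
  have half : ∀ (Q : Matrix (Fin m) (Fin m) ℝ) (hQ : Q.PosSemidef),
      (P + D - Q).PosSemidef →
      eigSum q Q ≤ ∑ i, μ i ^ (q-1) * ⟪v i, (WithLp.toLp 2 (Q *ᵥ v i) : EuclideanSpace ℝ (Fin m))⟫ := by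
    intro Q hQ hTQ
    set u := hQ.1.eigenvectorBasis with hus
    set a := hQ.1.eigenvalues with has
    have ha0 : ∀ j, 0 ≤ a j := hQ.eigenvalues_nonneg
    rw [eigSum_herm hQ.1]
    have hqf : ∀ i, ⟪v i, (WithLp.toLp 2 (Q *ᵥ v i) : EuclideanSpace ℝ (Fin m))⟫ = ∑ j, a j * ⟪u j, v i⟫^2 :=
      fun i => qf_expand Q hQ.1 (v i)
    calc ∑ j, a j ^ q = ∑ j, a j * a j ^ (q-1) := by
          exact Finset.sum_congr rfl fun j _ => by rw [rpow_split (ha0 j) hq]; ring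
      _ ≤ ∑ j, a j * (∑ i, ⟪v i, u j⟫^2 * μ i ^ (q-1)) := by
          apply Finset.sum_le_sum
          intro j _
          exact mul_le_mul_of_nonneg_left (perj_key hQ hT hTQ (by linarith) j) (ha0 j)
      _ = ∑ j, ∑ i, a j * (⟪v i, u j⟫^2 * μ i ^ (q-1)) := by
          exact Finset.sum_congr rfl fun j _ => Finset.mul_sum _ _ _
      _ = ∑ i, ∑ j, a j * (⟪v i, u j⟫^2 * μ i ^ (q-1)) := Finset.sum_comm
      _ = ∑ i, μ i ^ (q-1) * (∑ j, a j * ⟪u j, v i⟫^2) := by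
          refine Finset.sum_congr rfl fun i _ => ?_
          rw [Finset.mul_sum]
          refine Finset.sum_congr rfl fun j _ => ?_
          rw [real_inner_comm (v i) (u j)]
          ring
      _ = ∑ i, μ i ^ (q-1) * ⟪v i, (WithLp.toLp 2 (Q *ᵥ v i) : EuclideanSpace ℝ (Fin m))⟫ := by
          exact Finset.sum_congr rfl fun i _ => by rw [hqf i]
  have h1 := half P hP hTP
  have h2 := half D hD hTD
  have hsum : eigSum q (P + D) = (∑ i, μ i ^ (q-1) * ⟪v i, (WithLp.toLp 2 (P *ᵥ v i) : EuclideanSpace ℝ (Fin m))⟫) +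
      ∑ i, μ i ^ (q-1) * ⟪v i, (WithLp.toLp 2 (D *ᵥ v i) : EuclideanSpace ℝ (Fin m))⟫ := by
    rw [eigSum_herm hT.1, ← Finset.sum_add_distrib]
    refine Finset.sum_congr rfl fun i _ => ?_
    rw [rpow_split (hμ0 i) hq]
    rw [hsplit i]
    ring
  rw [hsum]
  exact add_le_add h1 h2

include hP hD in
theorem eigSum_mono (hq : 1 ≤ q) : eigSum q P ≤ eigSum q (P + D) := by
  have h1 := eigSum_superadd hP hD hq
  have h2 := eigSum_nonneg (q := q) hD
  linarith

include hP hD in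
theorem eigSum_subadd (hq : 1 ≤ q) :
    eigSum q (P + D) ^ (1/q) ≤ eigSum q P ^ (1/q) + eigSum q D ^ (1/q) := by
  have hT : (P + D).PosSemidef := hP.add hD
  set v := hT.1.eigenvectorBasis with hv
  set μ := hT.1.eigenvalues with hμ
  set f : Fin m → ℝ := fun i => ⟪v i, (WithLp.toLp 2 (P *ᵥ v i) : EuclideanSpace ℝ (Fin m))⟫ with hf
  set g : Fin m → ℝ := fun i => ⟪v i, (WithLp.toLp 2 (D *ᵥ v i) : EuclideanSpace ℝ (Fin m))⟫ with hg
  have hf0 : ∀ i, 0 ≤ f i := fun i => psd_qf_nonneg hP (v i)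
  have hg0 : ∀ i, 0 ≤ g i := fun i => psd_qf_nonneg hD (v i)
  have hsplit : ∀ i, μ i = f i + g i := by
    intro i
    have hq1 := qf_onbasis (P + D) hT.1 i
    have hadd : ((P + D) *ᵥ (v i : EuclideanSpace ℝ (Fin m))) = (P *ᵥ v i) + (D *ᵥ v i) :=
      Matrix.add_mulVec P D (v i)
    rw [show (WithLp.toLp 2 ((P + D) *ᵥ (v i : EuclideanSpace ℝ (Fin m))) : EuclideanSpace ℝ (Fin m)) =
        ((WithLp.toLp 2 (P *ᵥ v i) : EuclideanSpace ℝ (Fin m)) + (WithLp.toLp 2 (D *ᵥ v i) : EuclideanSpace ℝ (Fin m))) from by rw [hadd, WithLp.toLp_add],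
      inner_add_right] at hq1
    rw [hμ]
    exact hq1.symm
  have hq0 : 0 < q := by linarith
  have step1 : eigSum q (P + D) = ∑ i, (f i + g i) ^ q := by
    rw [eigSum_herm hT.1]
    exact Finset.sum_congr rfl fun i _ => by rw [← hsplit i]
  have step2 : (∑ i, (f i + g i) ^ q) ^ (1/q) ≤
      (∑ i, f i ^ q) ^ (1/q) + (∑ i, g i ^ q) ^ (1/q) :=
    Real.Lp_add_le_of_nonneg (s := Finset.univ) (f := f) (g := g) hq (fun i _ => hf0 i) (fun i _ => hg0 i)
  have step3 : (∑ i, f i ^ q) ^ (1/q) ≤ eigSum q P ^ (1/q) :=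
    Real.rpow_le_rpow (Finset.sum_nonneg fun i _ => Real.rpow_nonneg (hf0 i) q)
      (peierls hP v hq) (by positivity)
  have step4 : (∑ i, g i ^ q) ^ (1/q) ≤ eigSum q D ^ (1/q) :=
    Real.rpow_le_rpow (Finset.sum_nonneg fun i _ => Real.rpow_nonneg (hg0 i) q)
      (peierls hD v hq) (by positivity)
  rw [step1]
  linarith

end eigSumFacts

theorem psd_transpose_mul_self {n : Type*} [Fintype n] (A : Matrix n (Fin m) ℝ) :
    (Aᵀ * A).PosSemidef := by
  have := Matrix.posSemidef_conjTranspose_mul_self A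
  rwa [Matrix.conjTranspose_eq_transpose_of_trivial] at this

theorem schattenNorm_eq {N : Type*} [Fintype N] (p : ℝ) (M : Matrix N (Fin m) ℝ) :
    schattenNorm p M = eigSum (p/2) (Mᵀ * M) ^ (1/p) := by
  unfold schattenNorm
  conv_rhs => rw [show (Mᵀ * M) = (Mᴴ * M) from by rw [Matrix.conjTranspose_eq_transpose_of_trivial]]
  rw [eigSum_herm (Matrix.isHermitian_conjTranspose_mul_self M)]
  congr 1
  refine Finset.sum_congr rfl fun i _ => ?_
  have h0 : 0 ≤ (Matrix.isHermitian_conjTranspose_mul_self M).eigenvalues i :=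
    (Matrix.posSemidef_conjTranspose_mul_self M).eigenvalues_nonneg i
  rw [Real.sqrt_eq_rpow, ← Real.rpow_mul h0]
  congr 1
  ring

theorem gram_fromRows {n₁ n₂ : Type*} (A : Matrix n₁ (Fin m) ℝ) (B : Matrix n₂ (Fin m) ℝ)
    [Fintype n₁] [Fintype n₂] :
    (Matrix.fromRows A B)ᵀ * Matrix.fromRows A B = Aᵀ * A + Bᵀ * B := by
  rw [Matrix.transpose_fromRows, Matrix.fromCols_mul_fromRows]

theorem star_ineq {p ε q : ℝ} (hq : 1 ≤ q) (hpq : p = 2*q) (hε0 : 0 < ε) (hε1 : ε < 1) :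
    (1 - (1 - ε ^ q / q) ^ p) ^ (1/q) ≤ 2*ε - ε^2 := by
  have hq0 : 0 < q := by linarith
  set s : ℝ := ε ^ q with hs
  have hs0 : 0 < s := Real.rpow_pos_of_pos hε0 q
  have hs1 : s < 1 := Real.rpow_lt_one hε0.le hε1 hq0
  set δ : ℝ := s / q with hδ
  have hδ0 : 0 < δ := by positivity
  have hδ1 : δ < 1 := lt_of_le_of_lt (by rw [hδ]; exact div_le_self hs0.le hq) hs1
  have b1 : 1 - s ≤ (1 - δ) ^ q := by
    have := one_add_mul_self_le_rpow_one_add (show (-1:ℝ) ≤ -δ by linarith) hq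
    have he : 1 + q * (-δ) = 1 - s := by rw [hδ]; field_simp; ring
    rw [he] at this
    rw [show (1:ℝ) + -δ = 1 - δ from by ring] at this
    exact this
  have b2 : (1 - δ) ^ p = ((1-δ)^q)^2 := by
    rw [hpq, show 2*q = q*2 from by ring, Real.rpow_mul (by linarith : (0:ℝ) ≤ 1 - δ)]
    rw [show ((1-δ)^q)^(2:ℝ) = ((1-δ)^q)^((2:ℕ):ℝ) from by norm_num, Real.rpow_natCast]
  have b3 : (1 - s)^2 ≤ ((1-δ)^q)^2 := by
    apply pow_le_pow_left₀ (by linarith) b1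
  have b4 : 2 - s ≤ (2 - ε) ^ q := by
    have hcv := (convexOn_rpow hq).2 (Set.mem_Ici.2 (by linarith : (0:ℝ) ≤ 2 - ε))
      (Set.mem_Ici.2 hε0.le) (by norm_num : (0:ℝ) ≤ (1:ℝ)/2) (by norm_num : (0:ℝ) ≤ (1:ℝ)/2)
      (by norm_num)
    simp only [smul_eq_mul] at hcv
    rw [show (1:ℝ)/2 * (2-ε) + 1/2 * ε = 1 from by ring, Real.one_rpow] at hcv
    rw [hs]
    linarith
  have b5 : s * (2 - s) ≤ (ε * (2 - ε)) ^ q := by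
    rw [Real.mul_rpow hε0.le (by linarith : (0:ℝ) ≤ 2 - ε), ← hs]
    have := mul_le_mul_of_nonneg_left b4 hs0.le
    linarith
  have hκ0 : 0 ≤ 1 - (1 - δ) ^ p := by
    have : (1 - δ) ^ p ≤ 1 :=
      Real.rpow_le_one (by linarith) (by linarith) (by rw [hpq]; linarith)
    linarith
  have hκle : 1 - (1 - δ) ^ p ≤ (ε * (2 - ε)) ^ q := by
    rw [b2]
    nlinarith [b3]
  calc (1 - (1 - ε ^ q / q) ^ p) ^ (1/q) = (1 - (1 - δ) ^ p) ^ (1/q) := rfl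
    _ ≤ ((ε * (2 - ε)) ^ q) ^ (1/q) :=
        Real.rpow_le_rpow hκ0 hκle (by positivity)
    _ = ε * (2 - ε) := by
        rw [one_div, Real.rpow_rpow_inv (by nlinarith) (ne_of_gt hq0)]
    _ = 2*ε - ε^2 := by ring



set_option maxHeartbeats 2000000 in
/-- For `p ≥ 2` and `0 < ε < 1`, the Schatten p-norm is `(ε, ε^{p/2}/(p/2))`-smooth:
if `A = [X; Y]` and `(1 − ε^{p/2}/(p/2))·‖A‖_{S_p} ≤ ‖Y‖_{S_p}`, then for every `C`,
`(1 − ε)·‖[A; C]‖_{S_p} ≤ ‖[Y; C]‖_{S_p}`. -/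
theorem schattenNorm_smooth_of_two_le {m : ℕ} (p ε : ℝ) (hp : 2 ≤ p)
    (hε0 : 0 < ε) (hε1 : ε < 1) :
    ∀ {n₁ n₂ n₃ : ℕ} (X : Matrix (Fin n₁) (Fin m) ℝ) (Y : Matrix (Fin n₂) (Fin m) ℝ)
      (C : Matrix (Fin n₃) (Fin m) ℝ),
      (1 - ε ^ (p / 2) / (p / 2)) * schattenNorm p (Matrix.fromRows X Y) ≤ schattenNorm p Y →
      (1 - ε) * schattenNorm p (Matrix.fromRows (Matrix.fromRows X Y) C) ≤
        schattenNorm p (Matrix.fromRows Y C) := by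
  intro n₁ n₂ n₃ X Y C hyp
  have hp0 : (0:ℝ) < p := by linarith
  set q : ℝ := p / 2 with hq
  have hq1 : (1:ℝ) ≤ q := by rw [hq]; linarith
  have hq0 : (0:ℝ) < q := by linarith
  have hpq : p = 2 * q := by rw [hq]; ring
  set δ : ℝ := ε ^ q / q with hδdef
  have hs0 : 0 < ε ^ q := Real.rpow_pos_of_pos hε0 q
  have hs1 : ε ^ q < 1 := Real.rpow_lt_one hε0.le hε1 hq0
  have hδ0 : 0 < δ := by positivity
  have hδ1 : δ < 1 := lt_of_le_of_lt (by rw [hδdef]; exact div_le_self hs0.le hq1) hs1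
  -- Gram matrices
  set R : Matrix (Fin m) (Fin m) ℝ := Xᵀ * X with hR
  set Q : Matrix (Fin m) (Fin m) ℝ := Yᵀ * Y with hQ
  set D : Matrix (Fin m) (Fin m) ℝ := Cᵀ * C with hD
  have hRpsd : R.PosSemidef := psd_transpose_mul_self X
  have hQpsd : Q.PosSemidef := psd_transpose_mul_self Y
  have hDpsd : D.PosSemidef := psd_transpose_mul_self C
  -- rewrite the four Schatten norms
  have e1 : schattenNorm p (Matrix.fromRows X Y) = eigSum q (R + Q) ^ (1/p) := by
    rw [schattenNorm_eq, gram_fromRows, ← hq, ← hR, ← hQ]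
  have e2 : schattenNorm p Y = eigSum q Q ^ (1/p) := by
    rw [schattenNorm_eq, ← hq, ← hQ]
  have e3 : schattenNorm p (Matrix.fromRows (Matrix.fromRows X Y) C) =
      eigSum q ((R + Q) + D) ^ (1/p) := by
    rw [schattenNorm_eq, gram_fromRows, gram_fromRows, ← hq, ← hR, ← hQ, ← hD]
  have e4 : schattenNorm p (Matrix.fromRows Y C) = eigSum q (Q + D) ^ (1/p) := by
    rw [schattenNorm_eq, gram_fromRows, ← hq, ← hQ, ← hD]
  rw [e1, e2] at hyp
  rw [e3, e4]
  set FP : ℝ := eigSum q (R + Q) with hFP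
  set FQ : ℝ := eigSum q Q with hFQ
  set FR : ℝ := eigSum q R with hFR
  set FPD : ℝ := eigSum q ((R + Q) + D) with hFPD
  set FQD : ℝ := eigSum q (Q + D) with hFQD
  have hFP0 : 0 ≤ FP := eigSum_nonneg (hRpsd.add hQpsd)
  have hFQ0 : 0 ≤ FQ := eigSum_nonneg hQpsd
  have hFR0 : 0 ≤ FR := eigSum_nonneg hRpsd
  have hFPD0 : 0 ≤ FPD := eigSum_nonneg ((hRpsd.add hQpsd).add hDpsd)
  have hFQD0 : 0 ≤ FQD := eigSum_nonneg (hQpsd.add hDpsd)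
  -- hypothesis to the p-th power
  have hyp' : (1 - δ) ^ p * FP ≤ FQ := by
    have h1 : ((1 - δ) * FP ^ (1/p)) ^ p ≤ (FQ ^ (1/p)) ^ p :=
      Real.rpow_le_rpow (mul_nonneg (by linarith) (Real.rpow_nonneg hFP0 _)) hyp hp0.le
    rw [Real.mul_rpow (by linarith) (by positivity)] at h1
    rw [one_div, Real.rpow_inv_rpow hFP0 (ne_of_gt hp0),
      Real.rpow_inv_rpow hFQ0 (ne_of_gt hp0)] at h1
    exact h1
  set κ : ℝ := 1 - (1 - δ) ^ p with hκ
  have hκ0 : 0 ≤ κ := by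
    have : (1 - δ) ^ p ≤ 1 := Real.rpow_le_one (by linarith) (by linarith) hp0.le
    rw [hκ]; linarith
  -- superadditivity
  have c1 : FR + FQ ≤ FP := eigSum_superadd hRpsd hQpsd hq1
  have c2 : FR ≤ κ * FP := by rw [hκ]; nlinarith
  have c3 : FP ≤ FPD := eigSum_mono (hRpsd.add hQpsd) hDpsd hq1
  have c4 : FR ≤ κ * FPD := le_trans c2 (mul_le_mul_of_nonneg_left c3 hκ0)
  -- subadditivity
  have c5 : FPD ^ (1/q) ≤ FQD ^ (1/q) + FR ^ (1/q) := by
    have := eigSum_subadd (hQpsd.add hDpsd) hRpsd hq1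
    rw [show (Q + D) + R = (R + Q) + D from by abel] at this
    exact this
  have c6 : FR ^ (1/q) ≤ κ ^ (1/q) * FPD ^ (1/q) := by
    calc FR ^ (1/q) ≤ (κ * FPD) ^ (1/q) := Real.rpow_le_rpow hFR0 c4 (by positivity)
    _ = κ ^ (1/q) * FPD ^ (1/q) := Real.mul_rpow hκ0 hFPD0
  have c7 : κ ^ (1/q) ≤ 2*ε - ε^2 := star_ineq hq1 hpq hε0 hε1
  have c8 : (1 - ε)^2 * FPD ^ (1/q) ≤ FQD ^ (1/q) := by
    have h1 : κ ^ (1/q) * FPD ^ (1/q) ≤ (2*ε - ε^2) * FPD ^ (1/q) :=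
      mul_le_mul_of_nonneg_right c7 (by positivity)
    nlinarith
  -- take square roots
  have hhalf : ∀ F : ℝ, 0 ≤ F → (F ^ (1/q)) ^ ((1:ℝ)/2) = F ^ (1/p) := by
    intro F hF
    rw [← Real.rpow_mul hF]
    congr 1
    rw [hpq]
    field_simp
  have c9 : ((1 - ε)^2 * FPD ^ (1/q)) ^ ((1:ℝ)/2) ≤ (FQD ^ (1/q)) ^ ((1:ℝ)/2) :=
    Real.rpow_le_rpow (by positivity) c8 (by norm_num)
  rw [Real.mul_rpow (sq_nonneg _) (by positivity), hhalf FPD hFPD0, hhalf FQD hFQD0] at c9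
  have hsq : ((1 - ε)^2 : ℝ) ^ ((1:ℝ)/2) = 1 - ε := by
    rw [← Real.rpow_natCast (1 - ε) 2, ← Real.rpow_mul (by linarith)]
    norm_num
  rw [hsq] at c9
  exact c9
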